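/- Let O⁺(n) be the free orthogonal quantum group *-bialgebra with coproduct Δ(x_{ij}) = Σ_k x_{ik} ⊗ x_{kj} and counit ε(x_{ij}) = δ_{ij}. Suppose l : O⁺(n) → ℂ is a Gaussian generator, i.e. there is an ε-cocycle η into a pre-Hilbert space with l(ab) = l(a)ε(b) + ε(a)l(b) + ⟨η(a*), η(b)⟩, l hermitian, and l is bi-invariant: (l ⊗ id)Δ = (id ⊗ l)Δ. Then l = 0 on the generators and on products of generators; in particular η(x_{ij}) = 0 for all i ≠ j and consequently l ≡ 0 on the augmentation ideal, i.e. there is no nonzero bi-invariant Gaussian generator on O⁺(n). -/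

import Mathlib

open TensorProduct
open scoped ComplexConjugate

noncomputable section

/-- The orthogonality relations of the free orthogonal quantum group `O⁺(n)`. -/
inductive FreeOrthRel (n : ℕ) : FreeAlgebra ℂ (Fin n × Fin n) → FreeAlgebra ℂ (Fin n × Fin n) → Prop
  | col (i j : Fin n) : FreeOrthRel n
      (∑ k : Fin n, FreeAlgebra.ι ℂ ((k, i) : Fin n × Fin n) * FreeAlgebra.ι ℂ ((k, j) : Fin n × Fin n))
      (if i = j then 1 else 0)
  | row (i j : Fin n) : FreeOrthRel n
      (∑ k : Fin n, FreeAlgebra.ι ℂ ((i, k) : Fin n × Fin n) * FreeAlgebra.ι ℂ ((j, k) : Fin n × Fin n))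
      (if i = j then 1 else 0)

/-- The free orthogonal quantum group algebra `O⁺(n)`. -/
abbrev FreeOrth (n : ℕ) := RingQuot (FreeOrthRel n)

/-- The generator `x_{ij}` of `O⁺(n)`. -/
def freeOrthX {n : ℕ} (i j : Fin n) : FreeOrth n :=
  RingQuot.mkAlgHom ℂ (FreeOrthRel n) (FreeAlgebra.ι ℂ (i, j))

/- ### Auxiliary material for the proof -/

/-- The algebra map on the free algebra sending `x_{ab}` to `δ_{ab} E a`. -/
def FreeOrthAux.genMap {n : ℕ} {A : Type*} [Ring A] [Algebra ℂ A] (E : Fin n → A) :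
    FreeAlgebra ℂ (Fin n × Fin n) →ₐ[ℂ] A :=
  FreeAlgebra.lift ℂ (fun p => if p.1 = p.2 then E p.1 else 0)

lemma FreeOrthAux.genMap_rel {n : ℕ} {A : Type*} [Ring A] [Algebra ℂ A] (E : Fin n → A)
    (hE : ∀ a, E a * E a = 1) ⦃x y : FreeAlgebra ℂ (Fin n × Fin n)⦄ (h : FreeOrthRel n x y) :
    genMap E x = genMap E y := by
  cases h with
  | col i j =>
      have h1 : genMap E (∑ k : Fin n, FreeAlgebra.ι ℂ ((k, i) : Fin n × Fin n) *
          FreeAlgebra.ι ℂ ((k, j) : Fin n × Fin n))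
          = ∑ k : Fin n, (if k = i then E k else 0) * (if k = j then E k else 0) := by
        simp only [map_sum, map_mul, genMap, FreeAlgebra.lift_ι_apply]
      rw [h1]
      have h : ∀ k : Fin n, (if k = i then E k else 0) * (if k = j then E k else 0)
          = if k = i then (if i = j then (1:A) else 0) else 0 := by
        intro k
        by_cases h1 : k = i <;> by_cases h2 : k = j <;> simp_all [hE]
      rw [Finset.sum_congr rfl (fun k _ => h k)]
      split_ifs <;> simp [genMap]
  | row i j =>
      have h1 : genMap E (∑ k : Fin n, FreeAlgebra.ι ℂ ((i, k) : Fin n × Fin n) *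
          FreeAlgebra.ι ℂ ((j, k) : Fin n × Fin n))
          = ∑ k : Fin n, (if i = k then E i else 0) * (if j = k then E j else 0) := by
        simp only [map_sum, map_mul, genMap, FreeAlgebra.lift_ι_apply]
      rw [h1]
      have h : ∀ k : Fin n, (if i = k then E i else 0) * (if j = k then E j else 0)
          = if i = k then (if i = j then (1:A) else 0) else 0 := by
        intro k
        by_cases ha : i = k
        · by_cases hb : j = k
          · have hij : i = j := ha.trans hb.symm
            simp [ha, hb, hij, hE]
          · have hij : ¬ i = j := fun h => hb (h ▸ ha)
            simp [ha, hb, hij, Ne.symm hb]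
        · simp [ha]
      rw [Finset.sum_congr rfl (fun k _ => h k)]
      split_ifs <;> simp [genMap]

/-- A representation of `O⁺(n)` sending `x_{ab}` to `δ_{ab} E a`, for any family of
square roots of unity `E`. -/
def FreeOrthAux.rep {n : ℕ} {A : Type*} [Ring A] [Algebra ℂ A] (E : Fin n → A)
    (hE : ∀ a, E a * E a = 1) : FreeOrth n →ₐ[ℂ] A :=
  RingQuot.liftAlgHom ℂ ⟨genMap E, genMap_rel E hE⟩

lemma FreeOrthAux.rep_X {n : ℕ} {A : Type*} [Ring A] [Algebra ℂ A] (E : Fin n → A)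
    (hE : ∀ a, E a * E a = 1) (i j : Fin n) :
    rep E hE (freeOrthX i j) = if i = j then E i else 0 := by
  simp [rep, freeOrthX, RingQuot.liftAlgHom_mkAlgHom_apply, genMap, FreeAlgebra.lift_ι_apply]

/-- The column orthogonality relation, in `O⁺(n)`. -/
lemma FreeOrthAux.rel_col {n : ℕ} (i j : Fin n) :
    (∑ k : Fin n, freeOrthX k i * freeOrthX k j) = if i = j then (1 : FreeOrth n) else 0 := by
  have h := RingQuot.mkAlgHom_rel ℂ (FreeOrthRel.col i j)
  simp only [map_sum, map_mul, apply_ite (RingQuot.mkAlgHom ℂ (FreeOrthRel n)), map_one,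
    map_zero] at h
  simpa [freeOrthX] using h

/-- There is no nonzero bi-invariant Gaussian generator on the free orthogonal quantum
group `O⁺(n)`: any hermitian functional `l` with Gaussian cocycle `η` which is bi-invariant
with respect to the coproduct `Δ(x_{ij}) = Σ_k x_{ik} ⊗ x_{kj}` vanishes identically, and
`η` vanishes on the off-diagonal generators. -/
theorem freeOrth_no_biinvariant_gaussian_generator
    (n : ℕ) (hn : 2 ≤ n)
    -- the counit
    (ε : FreeOrth n →ₐ[ℂ] ℂ)
    (hε : ∀ i j : Fin n, ε (freeOrthX i j) = if i = j then 1 else 0)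
    -- the coproduct
    (Δ : FreeOrth n →ₐ[ℂ] (FreeOrth n ⊗[ℂ] FreeOrth n))
    (hΔ : ∀ i j : Fin n, Δ (freeOrthX i j) = ∑ k : Fin n, freeOrthX i k ⊗ₜ[ℂ] freeOrthX k j)
    -- the *-structure, fixing the self-adjoint generators
    (st : FreeOrth n → FreeOrth n)
    (hst_add : ∀ a b : FreeOrth n, st (a + b) = st a + st b)
    (hst_mul : ∀ a b : FreeOrth n, st (a * b) = st b * st a)
    (hst_smul : ∀ (c : ℂ) (a : FreeOrth n), st (c • a) = (conj c) • st a)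
    (hst_invol : ∀ a : FreeOrth n, st (st a) = a)
    (hst_gen : ∀ i j : Fin n, st (freeOrthX i j) = freeOrthX i j)
    -- a Gaussian generator: hermitian `l` with `ε`-`ε`-cocycle `η`
    (D : Type*) [NormedAddCommGroup D] [InnerProductSpace ℂ D]
    (η : FreeOrth n →ₗ[ℂ] D)
    (hη : ∀ a b : FreeOrth n, η (a * b) = ε b • η a + ε a • η b)
    (l : FreeOrth n →ₗ[ℂ] ℂ)
    (hl_herm : ∀ a : FreeOrth n, l (st a) = conj (l a))
    (hl : ∀ a b : FreeOrth n,
      l (a * b) = l a * ε b + ε a * l b + inner ℂ (η (st a)) (η b))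
    -- bi-invariance: (l ⊗ id)∘Δ = (id ⊗ l)∘Δ
    (h_biinv : ∀ a : FreeOrth n,
      (TensorProduct.lid ℂ (FreeOrth n)) ((TensorProduct.map l LinearMap.id) (Δ a)) =
      (TensorProduct.rid ℂ (FreeOrth n)) ((TensorProduct.map LinearMap.id l) (Δ a))) :
    (∀ i j : Fin n, i ≠ j → η (freeOrthX i j) = 0) ∧ (∀ a : FreeOrth n, l a = 0) := by
  classical
  -- basic values at 1
  have hη1 : η 1 = 0 := by
    have h := hη 1 1
    simp only [mul_one, map_one, one_smul] at h
    exact (left_eq_add.mp h)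
  have hl1 : l 1 = 0 := by
    have h := hl 1 1
    simp only [mul_one, one_mul, map_one, hη1, inner_zero_right, add_zero] at h
    exact (left_eq_add.mp h)
  -- antisymmetry of η on generators
  have hηanti : ∀ i j : Fin n, η (freeOrthX j i) + η (freeOrthX i j) = 0 := by
    intro i j
    have h := congrArg η (FreeOrthAux.rel_col i j)
    have h2 : ∀ k : Fin n, η (freeOrthX k i * freeOrthX k j)
        = (if k = j then (1:ℂ) else 0) • η (freeOrthX k i)
          + (if k = i then (1:ℂ) else 0) • η (freeOrthX k j) := fun k => by
      rw [hη, hε, hε]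
    rw [map_sum] at h
    rw [Finset.sum_congr rfl (fun k _ => h2 k)] at h
    simp only [ite_smul, one_smul, zero_smul, Finset.sum_add_distrib,
      Finset.sum_ite_eq', Finset.mem_univ, if_true] at h
    rw [h]
    split_ifs <;> simp [hη1]
  have hηdiag : ∀ i : Fin n, η (freeOrthX i i) = 0 := by
    intro i
    have := hηanti i i
    have h2 : (2:ℂ) • η (freeOrthX i i) = 0 := by
      rw [two_smul]; exact this
    simpa using (smul_eq_zero.mp h2).resolve_left (by norm_num)
  -- first-order bi-invariance
  have hb1 : ∀ i j : Fin n, (∑ k : Fin n, l (freeOrthX i k) • freeOrthX k j)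
      = ∑ k : Fin n, l (freeOrthX k j) • freeOrthX i k := by
    intro i j
    have h := h_biinv (freeOrthX i j)
    rw [hΔ i j] at h
    simpa [map_sum, TensorProduct.map_tmul, TensorProduct.lid_tmul,
      TensorProduct.rid_tmul] using h
  -- second-order bi-invariance
  have hΔ2 : ∀ i j k m : Fin n, Δ (freeOrthX i j * freeOrthX k m)
      = ∑ p : Fin n, ∑ q : Fin n,
          (freeOrthX i p * freeOrthX k q) ⊗ₜ[ℂ] (freeOrthX p j * freeOrthX q m) := by
    intro i j k m
    rw [map_mul, hΔ, hΔ, Finset.sum_mul_sum]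
    simp [Algebra.TensorProduct.tmul_mul_tmul]
  have hb2 : ∀ i j k m : Fin n,
      (∑ p : Fin n, ∑ q : Fin n,
        l (freeOrthX i p * freeOrthX k q) • (freeOrthX p j * freeOrthX q m))
      = ∑ p : Fin n, ∑ q : Fin n,
          l (freeOrthX p j * freeOrthX q m) • (freeOrthX i p * freeOrthX k q) := by
    intro i j k m
    have h := h_biinv (freeOrthX i j * freeOrthX k m)
    rw [hΔ2 i j k m] at h
    simpa [map_sum, TensorProduct.map_tmul, TensorProduct.lid_tmul,
      TensorProduct.rid_tmul] using h
  -- the 2x2 matrix representation associated to a pair i ≠ j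
  have main : ∀ i j : Fin n, i ≠ j →
      l (freeOrthX i j) = 0 ∧ l (freeOrthX i j * freeOrthX j i) = 0 := by
    intro i j hij
    set σx : Matrix (Fin 2) (Fin 2) ℂ := !![0,1;1,0] with hσx
    set σz : Matrix (Fin 2) (Fin 2) ℂ := !![1,0;0,-1] with hσz
    set E : Fin n → Matrix (Fin 2) (Fin 2) ℂ :=
      fun a => if a = i then σx else if a = j then σz else 1 with hEdef
    have hE : ∀ a, E a * E a = 1 := by
      intro a
      show (if a = i then σx else if a = j then σz else 1) *
        (if a = i then σx else if a = j then σz else 1) = 1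
      split_ifs with h1 h2
      · rw [hσx]; norm_num [Matrix.mul_fin_two]; rw [Matrix.one_fin_two]
      · rw [hσz]; norm_num [Matrix.mul_fin_two]; rw [Matrix.one_fin_two]
      · exact one_mul 1
    have hEi : E i = σx := by simp [hEdef]
    have hEj : E j = σz := by simp [hEdef, hij, Ne.symm hij]
    constructor
    · -- first order
      have h := congrArg (FreeOrthAux.rep E hE) (hb1 i j)
      simp only [map_sum, map_smul, FreeOrthAux.rep_X] at h
      simp only [smul_ite_zero, Finset.sum_ite_eq, Finset.sum_ite_eq',
        Finset.mem_univ, if_true] at h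
      rw [hEi, hEj] at h
      have h00 := congrFun (congrFun h 0) 0
      simpa [hσx, hσz, Matrix.smul_apply] using h00
    · -- second order
      have h := congrArg (FreeOrthAux.rep E hE) (hb2 i j j i)
      simp only [map_sum, map_smul, map_mul, FreeOrthAux.rep_X] at h
      simp only [ite_mul, mul_ite, mul_zero, zero_mul, smul_ite_zero,
        Finset.sum_ite_irrel, Finset.sum_const_zero, Finset.sum_ite_eq, Finset.sum_ite_eq',
        Finset.mem_univ, if_true] at h
      rw [hEi, hEj] at h
      have h01 := congrFun (congrFun h 0) 1
      have hcalc : (σz * σx) 0 1 = 1 ∧ (σx * σz) 0 1 = -1 := by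
        constructor <;> simp [hσx, hσz, Matrix.mul_apply, Fin.sum_univ_two]
      rw [Matrix.smul_apply, Matrix.smul_apply] at h01
      rw [hcalc.1, hcalc.2] at h01
      have : (2:ℂ) * l (freeOrthX i j * freeOrthX j i) = 0 := by
        rw [two_mul]; rw [smul_eq_mul, smul_eq_mul] at h01; linear_combination h01
      exact (mul_eq_zero.mp this).resolve_left (by norm_num)
  -- η vanishes off the diagonal
  have hηoff : ∀ i j : Fin n, i ≠ j → η (freeOrthX i j) = 0 := by
    intro i j hij
    have h := hl (freeOrthX i j) (freeOrthX j i)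
    rw [(main i j hij).2, hst_gen, hε, hε] at h
    rw [if_neg hij, if_neg (Ne.symm hij)] at h
    simp only [mul_zero, zero_mul, zero_add] at h
    have hanti := hηanti j i
    have hji : η (freeOrthX j i) = - η (freeOrthX i j) := by
      have := hηanti j i
      linear_combination (norm := module) this
    rw [hji, inner_neg_right] at h
    have : (inner ℂ (η (freeOrthX i j)) (η (freeOrthX i j)) : ℂ) = 0 := by
      have := h.symm
      simpa [neg_eq_zero] using this
    exact inner_self_eq_zero.mp this
  have hηgen : ∀ i j : Fin n, η (freeOrthX i j) = 0 := by
    intro i j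
    rcases eq_or_ne i j with rfl | h
    · exact hηdiag i
    · exact hηoff i j h
  -- l vanishes on diagonal generators
  have hldiag : ∀ i : Fin n, l (freeOrthX i i) = 0 := by
    intro i
    have h := congrArg l (FreeOrthAux.rel_col i i)
    rw [if_pos rfl, map_sum] at h
    have h2 : ∀ k : Fin n, l (freeOrthX k i * freeOrthX k i)
        = 2 * ((if k = i then (1:ℂ) else 0) * l (freeOrthX k i)) := fun k => by
      rw [hl, hst_gen, hηgen, hε]
      simp only [inner_zero_left, add_zero]
      ring
    rw [Finset.sum_congr rfl (fun k _ => h2 k)] at h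
    simp only [ite_mul, one_mul, zero_mul, mul_ite, mul_zero, Finset.sum_ite_eq',
      Finset.mem_univ, if_true, hl1] at h
    have : (2:ℂ) * l (freeOrthX i i) = 0 := h
    exact (mul_eq_zero.mp this).resolve_left (by norm_num)
  have hlgen : ∀ i j : Fin n, l (freeOrthX i j) = 0 := by
    intro i j
    rcases eq_or_ne i j with rfl | h
    · exact hldiag i
    · exact (main i j h).1
  refine ⟨hηoff, ?_⟩
  -- l vanishes everywhere, by induction over the generated algebra
  have key : ∀ b : FreeAlgebra ℂ (Fin n × Fin n),
      l (RingQuot.mkAlgHom ℂ (FreeOrthRel n) b) = 0 ∧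
      η (RingQuot.mkAlgHom ℂ (FreeOrthRel n) b) = 0 := by
    intro b
    induction b using FreeAlgebra.induction with
    | grade0 r =>
        rw [AlgHom.commutes]
        constructor
        · rw [Algebra.algebraMap_eq_smul_one, map_smul, hl1, smul_zero]
        · rw [Algebra.algebraMap_eq_smul_one, map_smul, hη1, smul_zero]
    | grade1 p =>
        have : RingQuot.mkAlgHom ℂ (FreeOrthRel n) (FreeAlgebra.ι ℂ p)
            = freeOrthX p.1 p.2 := rfl
        rw [this]
        exact ⟨hlgen p.1 p.2, hηgen p.1 p.2⟩
    | mul x y hx hy =>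
        rw [map_mul]
        constructor
        · rw [hl, hx.1, hy.1, hy.2, inner_zero_right]; ring
        · rw [hη, hx.2, hy.2, smul_zero, smul_zero, add_zero]
    | add x y hx hy =>
        rw [map_add]
        constructor
        · rw [map_add, hx.1, hy.1, add_zero]
        · rw [map_add, hx.2, hy.2, add_zero]
  intro a
  obtain ⟨b, rfl⟩ := RingQuot.mkAlgHom_surjective ℂ (FreeOrthRel n) a
  exact (key b).1
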